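/- Let (λ_k)_{k≥1} be a sequence in [0,1), W a propagation matrix, and let the iterates start from the initial state Ψ^{(0)}_i ≡ 0 for every i (or, alternatively, with λ_1 = 0). Suppose there exist k_1 ≥ 1 and ε > 0 such that 1 − λ_k ≥ ε for all k ≥ k_1, and a configuration x̃ is a consensus solution at every iteration k ≥ k_1. Then E(x̃) = E*, i.e., x̃ is a global minimum of E. -/

import Mathlib

open Finset Filter Topology

/-- A propagation matrix: nonnegative entries with unit column sums. -/
def IsPropagationMatrix {n : ℕ} (W : Fin n → Fin n → ℝ) : Prop :=
  (∀ i j, 0 ≤ W i j) ∧ ∀ j, ∑ i, W i j = 1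

/-- The basic cooperative optimization update `T_λ`:
`T_λ(Ψ)_i(a) = min_{x : x_i = a} ((1−λ) E_i(x) + λ ∑_j w_{ij} Ψ_j(x_j))`. -/
noncomputable def coopT {n : ℕ} {D : Fin n → Type} [∀ i, Fintype (D i)]
    [∀ i, Nonempty (D i)]
    (E : Fin n → ((i : Fin n) → D i) → ℝ) (W : Fin n → Fin n → ℝ) (lam : ℝ)
    (Ψ : (i : Fin n) → D i → ℝ) : (i : Fin n) → D i → ℝ :=
  fun i a =>
    Finset.univ.inf' Finset.univ_nonempty
      (fun x : (j : Fin n) → D j =>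
        (1 - lam) * E i (Function.update x i a) +
          lam * ∑ j, W i j * Ψ j (Function.update x i a j))

/-- The total objective `E(x) = ∑ i, E_i(x)`. -/
def objective {n : ℕ} {D : Fin n → Type}
    (E : Fin n → ((i : Fin n) → D i) → ℝ) (x : (i : Fin n) → D i) : ℝ :=
  ∑ i, E i x

/-- `x̃` is a consensus solution with respect to the state `Ψ` and cooperation strength
`lam`: for every `i`, `x̃` globally minimizes the modified sub-objective
`x ↦ (1−λ) E_i(x) + λ ∑_j w_{ij} Ψ_j(x_j)`. -/
def IsConsensusState {n : ℕ} {D : Fin n → Type}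
    (E : Fin n → ((i : Fin n) → D i) → ℝ) (W : Fin n → Fin n → ℝ) (lam : ℝ)
    (Ψ : (i : Fin n) → D i → ℝ) (xt : (i : Fin n) → D i) : Prop :=
  ∀ i, ∀ x : (j : Fin n) → D j,
    (1 - lam) * E i xt + lam * ∑ j, W i j * Ψ j (xt j)
      ≤ (1 - lam) * E i x + lam * ∑ j, W i j * Ψ j (x j)

/-- Auxiliary coefficient sequence: `c₀ = 0`, `c_{k+1} = (1 - λ_{k+1}) + λ_{k+1} c_k`. -/
def cseq (lam : ℕ → ℝ) : ℕ → ℝ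
  | 0 => 0
  | (k+1) => (1 - lam (k+1)) + lam (k+1) * cseq lam k

/-- If `1 − λ_k ≥ ε > 0` for all `k ≥ k_1` and `x̃` is a consensus
solution at every iteration `k ≥ k_1` (starting from the zero initial state, or with
`λ_1 = 0`), then `E(x̃) = E*`, i.e. `x̃` is a global minimum of `E`. -/
theorem consensus_global_min_of_eps (n : ℕ) (hn : 1 ≤ n) (D : Fin n → Type)
    [∀ i, Fintype (D i)] [∀ i, Nonempty (D i)]
    (E : Fin n → ((i : Fin n) → D i) → ℝ) (W : Fin n → Fin n → ℝ)
    (hW : IsPropagationMatrix W)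
    (lam : ℕ → ℝ) (hlam : ∀ k, 0 ≤ lam k ∧ lam k < 1)
    (Psi : ℕ → (i : Fin n) → D i → ℝ)
    (hstep : ∀ k, Psi (k + 1) = coopT E W (lam (k + 1)) (Psi k))
    (hinit : (∀ i (a : D i), Psi 0 i a = 0) ∨ lam 1 = 0)
    (xt : (i : Fin n) → D i) (k1 : ℕ) (hk1 : 1 ≤ k1) (ε : ℝ) (hε : 0 < ε)
    (heps : ∀ k, k1 ≤ k → ε ≤ 1 - lam k)
    (hcons : ∀ k, k1 ≤ k → IsConsensusState E W (lam k) (Psi (k - 1)) xt) :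
    objective E xt = Finset.univ.inf' Finset.univ_nonempty (objective E) := by
  classical
  obtain ⟨hWpos, hWcol⟩ := hW
  -- a global minimizer
  obtain ⟨xs, -, hxs⟩ := Finset.exists_mem_eq_inf' (Finset.univ_nonempty) (objective E)
  have hxs_min : ∀ x, objective E xs ≤ objective E x := by
    intro x
    rw [← hxs]
    exact Finset.inf'_le _ (Finset.mem_univ x)
  set Estar := objective E xs with hEstar
  set Phi : ℕ → ((i : Fin n) → D i) → ℝ := fun k x => ∑ i, Psi k i (x i) with hPhidef
  -- column-sum swap
  have hswap : ∀ (g : (i : Fin n) → D i → ℝ) (x : (i : Fin n) → D i),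
      ∑ i, ∑ j, W i j * g j (x j) = ∑ j, g j (x j) := by
    intro g x
    rw [Finset.sum_comm]
    refine Finset.sum_congr rfl fun j _ => ?_
    rw [← Finset.sum_mul, hWcol j, one_mul]
  -- pointwise bound: coopT value at `x i` is at most the value of the sub-objective at `x`
  have hA : ∀ (lm : ℝ) (Ψ : (i : Fin n) → D i → ℝ) (i : Fin n) (x : (j : Fin n) → D j),
      coopT E W lm Ψ i (x i) ≤ (1 - lm) * E i x + lm * ∑ j, W i j * Ψ j (x j) := by
    intro lm Ψ i x
    have h := Finset.inf'_le
      (fun y : (j : Fin n) → D j =>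
        (1 - lm) * E i (Function.update y i (x i)) +
          lm * ∑ j, W i j * Ψ j (Function.update y i (x i) j)) (Finset.mem_univ x)
    simpa only [coopT, Function.update_eq_self] using h
  -- summed step bound
  have hstepPhi : ∀ (k : ℕ) (x : (i : Fin n) → D i),
      Phi (k+1) x ≤ (1 - lam (k+1)) * objective E x + lam (k+1) * Phi k x := by
    intro k x
    have h1 : Phi (k+1) x ≤
        ∑ i, ((1 - lam (k+1)) * E i x + lam (k+1) * ∑ j, W i j * Psi k j (x j)) := by
      simp only [hPhidef, hstep k]
      exact Finset.sum_le_sum fun i _ => hA _ _ i x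
    refine h1.trans_eq ?_
    rw [Finset.sum_add_distrib, ← Finset.mul_sum, ← Finset.mul_sum, hswap (Psi k) x]
    rfl
  -- nonnegativity of cseq
  have hc0 : ∀ k, 0 ≤ cseq lam k := by
    intro k
    induction k with
    | zero => simp [cseq]
    | succ k ih =>
        have h1 := (hlam (k+1)).1
        have h2 := (hlam (k+1)).2
        have : 0 ≤ lam (k+1) * cseq lam k := mul_nonneg h1 ih
        simp only [cseq]
        linarith
  -- key scaled invariant
  have hQ : ∀ k (x : (i : Fin n) → D i),
      lam (k+1) * Phi k x ≤ lam (k+1) * (cseq lam k * objective E x) := by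
    intro k
    induction k with
    | zero =>
        intro x
        rcases hinit with h0 | h0
        · have : Phi 0 x = 0 := by simp [hPhidef, h0]
          simp [this, cseq]
        · simp [h0]
    | succ k ih =>
        intro x
        refine mul_le_mul_of_nonneg_left ?_ (hlam (k+2)).1
        have h1 := hstepPhi k x
        have h2 := ih x
        simp only [cseq]
        nlinarith
  -- invariant: Phi (k+1) x ≤ c_{k+1} E(x)
  have hI : ∀ k (x : (i : Fin n) → D i),
      Phi (k+1) x ≤ cseq lam (k+1) * objective E x := by
    intro k x
    have h1 := hstepPhi k x
    have h2 := hQ k x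
    simp only [cseq]
    nlinarith
  -- consensus pointwise equality at iterations ≥ k1
  have hpt : ∀ m, k1 ≤ m + 1 → ∀ i,
      Psi (m+1) i (xt i)
        = (1 - lam (m+1)) * E i xt + lam (m+1) * ∑ j, W i j * Psi m j (xt j) := by
    intro m hm i
    have hc := hcons (m+1) hm
    rw [hstep m]
    refine le_antisymm (hA _ _ i xt) ?_
    refine Finset.le_inf' _ _ fun x _ => ?_
    exact hc i (Function.update x i (xt i))
  -- summed consensus equality
  have hCeq : ∀ m, k1 ≤ m + 1 →
      Phi (m+1) xt = (1 - lam (m+1)) * objective E xt + lam (m+1) * Phi m xt := by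
    intro m hm
    have : Phi (m+1) xt
        = ∑ i, ((1 - lam (m+1)) * E i xt + lam (m+1) * ∑ j, W i j * Psi m j (xt j)) :=
      Finset.sum_congr rfl fun i _ => hpt m hm i
    rw [this, Finset.sum_add_distrib, ← Finset.mul_sum, ← Finset.mul_sum, hswap (Psi m) xt]
    rfl
  -- summed consensus upper bound against the minimizer
  have hCle : ∀ m, k1 ≤ m + 1 →
      Phi (m+1) xt ≤ (1 - lam (m+1)) * Estar + lam (m+1) * Phi m xs := by
    intro m hm
    have hc := hcons (m+1) hm
    have h1 : Phi (m+1) xt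
        ≤ ∑ i, ((1 - lam (m+1)) * E i xs + lam (m+1) * ∑ j, W i j * Psi m j (xs j)) := by
      refine Finset.sum_le_sum fun i _ => ?_
      rw [hpt m hm i]
      exact hc i xs
    refine h1.trans_eq ?_
    rw [Finset.sum_add_distrib, ← Finset.mul_sum, ← Finset.mul_sum, hswap (Psi m) xs]
    rfl
  -- upper bound: Phi (m+1) xt ≤ c_{m+1} Estar for m+1 ≥ k1
  have hUB : ∀ m, k1 ≤ m + 1 → Phi (m+1) xt ≤ cseq lam (m+1) * Estar := by
    intro m hm
    have h1 := hCle m hm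
    have h2 := hQ m xs
    simp only [cseq]
    rw [hEstar] at *
    nlinarith
  -- defect sequence
  set d : ℕ → ℝ := fun k => Phi k xt - cseq lam k * objective E xt with hddef
  have hdrec : ∀ m, k1 ≤ m + 1 → d (m+1) = lam (m+1) * d m := by
    intro m hm
    have h1 := hCeq m hm
    simp only [hddef, cseq]
    nlinarith [h1]
  -- geometric decay
  obtain ⟨p, hp⟩ : ∃ p, k1 = p + 1 := ⟨k1 - 1, by omega⟩
  have hlamle : ∀ k, k1 ≤ k → lam k ≤ 1 - ε := fun k hk => by linarith [heps k hk]
  have hdk : ∀ m, |d (k1 + m)| ≤ (1 - ε)^(m+1) * |d p| := by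
    intro m
    induction m with
    | zero =>
        have h1 : d (p+1) = lam (p+1) * d p := hdrec p (by omega)
        have h2 : lam (p+1) ≤ 1 - ε := hlamle (p+1) (by omega)
        have h3 : 0 ≤ lam (p+1) := (hlam (p+1)).1
        have : |d (p+1)| = lam (p+1) * |d p| := by
          rw [h1, abs_mul, abs_of_nonneg h3]
        simp only [hp, Nat.add_zero]
        rw [this, pow_one]
        exact mul_le_mul_of_nonneg_right h2 (abs_nonneg _)
    | succ m ih =>
        have hk : k1 ≤ (k1 + m) + 1 := by omega
        have h1 : d (k1 + (m+1)) = lam ((k1 + m) + 1) * d (k1 + m) := by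
          exact hdrec (k1 + m) hk
        have h2 : lam ((k1+m)+1) ≤ 1 - ε := hlamle _ (by omega)
        have h3 : 0 ≤ lam ((k1+m)+1) := (hlam _).1
        have h4 : |d (k1 + (m+1))| ≤ (1 - ε) * |d (k1 + m)| := by
          rw [h1, abs_mul, abs_of_nonneg h3]
          exact mul_le_mul_of_nonneg_right h2 (abs_nonneg _)
        have h5 : (1 - ε) * |d (k1+m)| ≤ (1 - ε) * ((1-ε)^(m+1) * |d p|) := by
          have h6 : 0 ≤ 1 - ε := by
            have := heps k1 le_rfl
            have := (hlam k1).1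
            linarith
          exact mul_le_mul_of_nonneg_left ih h6
        calc |d (k1 + (m+1))| ≤ (1 - ε) * |d (k1+m)| := h4
          _ ≤ (1 - ε) * ((1-ε)^(m+1) * |d p|) := h5
          _ = (1 - ε)^(m+2) * |d p| := by ring
  -- c_k ≥ ε for k ≥ k1
  have hcge : ∀ m, ε ≤ cseq lam (k1 + m) := by
    intro m
    have h1 : k1 + m = (p + m) + 1 := by omega
    rw [h1]
    have h2 := heps ((p+m)+1) (by omega)
    have h3 : 0 ≤ lam ((p+m)+1) * cseq lam (p+m) := mul_nonneg (hlam _).1 (hc0 _)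
    simp only [cseq]
    linarith
  -- main inequality for each m
  have hmain : ∀ m, ε * (objective E xt - Estar) ≤ (1 - ε)^(m+1) * |d p| := by
    intro m
    have hk : k1 + m = (p + m) + 1 := by omega
    have hub : Phi (k1 + m) xt ≤ cseq lam (k1 + m) * Estar := by
      rw [hk]; exact hUB (p+m) (by omega)
    have hnn : 0 ≤ objective E xt - Estar := by
      have := hxs_min xt; linarith
    have h1 : ε * (objective E xt - Estar)
        ≤ cseq lam (k1 + m) * (objective E xt - Estar) :=
      mul_le_mul_of_nonneg_right (hcge m) hnn
    have h2 : cseq lam (k1 + m) * (objective E xt - Estar) ≤ -(d (k1 + m)) := by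
      simp only [hddef]
      nlinarith [hub]
    have h3 : -(d (k1 + m)) ≤ |d (k1 + m)| := neg_le_abs _
    calc ε * (objective E xt - Estar)
        ≤ cseq lam (k1 + m) * (objective E xt - Estar) := h1
      _ ≤ -(d (k1 + m)) := h2
      _ ≤ |d (k1 + m)| := h3
      _ ≤ (1 - ε)^(m+1) * |d p| := hdk m
  -- pass to the limit
  have hr0 : 0 ≤ 1 - ε := by
    have := heps k1 le_rfl
    have := (hlam k1).1
    linarith
  have hr1 : 1 - ε < 1 := by linarith
  have hlim0 : Tendsto (fun m : ℕ => (1 - ε)^m * |d p|) atTop (𝓝 0) := by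
    have h := (tendsto_pow_atTop_nhds_zero_of_lt_one hr0 hr1).mul_const |d p|
    rw [zero_mul] at h
    exact h
  have hlim : Tendsto (fun m : ℕ => (1 - ε)^(m+1) * |d p|) atTop (𝓝 0) := by
    have := hlim0.comp (tendsto_add_atTop_nat 1)
    simpa [Function.comp_def] using this
  have hle0 : ε * (objective E xt - Estar) ≤ 0 := ge_of_tendsto' hlim hmain
  have hnn : 0 ≤ objective E xt - Estar := by
    have := hxs_min xt; linarith
  have heq : objective E xt = Estar := by nlinarith
  rw [hxs]
  exact heq
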